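/- Let N, k be natural numbers, let i : Fin k → Fin N be a list of indices, and let x : Fin N → ℝ. Then the k-th mixed partial derivative ∂/∂x_{i 1} ⋯ ∂/∂x_{i k} of the function x ↦ exp((1/2)·Σ_{j} (x j)²) equals exp((1/2)·Σ_{j} (x j)²) multiplied by the sum, over all involutions σ of Fin k (permutations σ with σ ∘ σ = id), of the product over a ∈ Fin k of: (x (i a)) if σ a = a, and the indicator value (1 if i (σ a) = i a, else 0) if σ a ≠ a. -/

import Mathlib

/-- The partial derivative of `f : (Fin N → ℝ) → ℝ` in the `j`-th coordinate direction. -/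
noncomputable def partialDeriv' {N : ℕ} (j : Fin N) (f : (Fin N → ℝ) → ℝ) :
    (Fin N → ℝ) → ℝ :=
  fun y => fderiv ℝ f y (Pi.single j 1)

/-- The iterated mixed partial derivative `∂/∂x_{i 0} ⋯ ∂/∂x_{i (k-1)}` along the
list of indices `i : Fin k → Fin N`. -/
noncomputable def mixedPartialAlong {N k : ℕ} (i : Fin k → Fin N)
    (f : (Fin N → ℝ) → ℝ) : (Fin N → ℝ) → ℝ :=
  (List.ofFn i).foldr (fun j g => partialDeriv' j g) f

open MvPolynomial Finset

namespace WickAux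

variable {N : ℕ}

/-- derivative CLM of polynomial evaluation -/
noncomputable def evalDeriv (P : MvPolynomial (Fin N) ℝ) (y : Fin N → ℝ) :
    (Fin N → ℝ) →L[ℝ] ℝ :=
  ∑ j, eval y (pderiv j P) • ContinuousLinearMap.proj j

lemma hasFDerivAt_eval (P : MvPolynomial (Fin N) ℝ) (y : Fin N → ℝ) :
    HasFDerivAt (fun z => eval z P) (evalDeriv P y) y := by
  induction P using MvPolynomial.induction_on with
  | C a =>
      simp only [eval_C, evalDeriv, pderiv_C, map_zero, zero_smul, Finset.sum_const_zero]
      exact hasFDerivAt_const _ _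
  | add p q hp hq =>
      have := hp.fun_add hq
      simp only [eval_add]
      refine this.congr_fderiv (Eq.symm ?_)
      simp [evalDeriv, add_smul, Finset.sum_add_distrib]
  | mul_X p n hp =>
      have hn : HasFDerivAt (fun z : Fin N → ℝ => z n)
          (ContinuousLinearMap.proj (R := ℝ) (φ := fun _ : Fin N => ℝ) n) y :=
        hasFDerivAt_apply n y
      have := hp.fun_mul hn
      simp only [eval_mul, eval_X]
      refine this.congr_fderiv (Eq.symm ?_)
      simp only [evalDeriv, pderiv_mul, eval_add, eval_mul, eval_X, add_smul,
        Finset.sum_add_distrib]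
      rw [add_comm]
      congr 1
      · rw [Finset.sum_eq_single n]
        · simp [pderiv_X_self]
        · intro b _ hb
          simp [pderiv_X_of_ne (Ne.symm hb)]
        · simp
      · rw [Finset.smul_sum]
        refine Finset.sum_congr rfl fun b _ => ?_
        rw [smul_smul, mul_comm]
lemma evalDeriv_single (P : MvPolynomial (Fin N) ℝ) (y : Fin N → ℝ) (j : Fin N) :
    evalDeriv P y (Pi.single j 1) = eval y (pderiv j P) := by
  simp only [evalDeriv, ContinuousLinearMap.sum_apply, ContinuousLinearMap.smul_apply,
    ContinuousLinearMap.proj_apply, smul_eq_mul]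
  rw [Finset.sum_eq_single j] <;> simp_all [Pi.single_apply]

noncomputable def Eexp (y : Fin N → ℝ) : ℝ := Real.exp ((1 / 2) * ∑ j, (y j) ^ 2)

noncomputable def Ederiv (y : Fin N → ℝ) : (Fin N → ℝ) →L[ℝ] ℝ :=
  Eexp y • ∑ j, y j • ContinuousLinearMap.proj j

lemma hasFDerivAt_Eexp (y : Fin N → ℝ) : HasFDerivAt Eexp (Ederiv y) y := by
  have h1 : ∀ j : Fin N, HasFDerivAt (fun z : Fin N → ℝ => (z j) ^ 2)
      (y j • ContinuousLinearMap.proj (R := ℝ) (φ := fun _ : Fin N => ℝ) j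
        + y j • ContinuousLinearMap.proj (R := ℝ) (φ := fun _ : Fin N => ℝ) j) y := by
    intro j
    have := (hasFDerivAt_apply (𝕜 := ℝ) j y).fun_mul (hasFDerivAt_apply (𝕜 := ℝ) j y)
    simpa [pow_two] using this
  have h2 := HasFDerivAt.fun_sum (fun j (_ : j ∈ Finset.univ) => h1 j)
  have h3 := (h2.const_mul ((1:ℝ)/2)).exp
  have heq : Ederiv y = Real.exp ((1:ℝ)/2 * ∑ j, y j ^ 2) •
      ((1:ℝ)/2) • ∑ j : Fin N, (y j • ContinuousLinearMap.proj (R := ℝ) (φ := fun _ : Fin N => ℝ) j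
        + y j • ContinuousLinearMap.proj (R := ℝ) (φ := fun _ : Fin N => ℝ) j) := by
    ext v
    simp only [Ederiv, Eexp, ContinuousLinearMap.smul_apply, ContinuousLinearMap.sum_apply,
      ContinuousLinearMap.add_apply, ContinuousLinearMap.proj_apply, smul_eq_mul]
    congr 1
    rw [Finset.mul_sum]
    exact Finset.sum_congr rfl fun b _ => by ring
  rw [heq]
  exact h3

lemma Ederiv_single (y : Fin N → ℝ) (j : Fin N) :
    Ederiv y (Pi.single j 1) = Eexp y * y j := by
  simp only [Ederiv, ContinuousLinearMap.smul_apply, ContinuousLinearMap.sum_apply,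
    ContinuousLinearMap.proj_apply, smul_eq_mul]
  rw [Finset.sum_eq_single j] <;> simp_all [Pi.single_apply]

lemma step (j : Fin N) (P : MvPolynomial (Fin N) ℝ) :
    partialDeriv' j (fun y => Eexp y * eval y P)
      = fun y => Eexp y * eval y (X j * P + pderiv j P) := by
  funext y
  have h := (hasFDerivAt_Eexp y).fun_mul (hasFDerivAt_eval P y)
  show fderiv ℝ (fun y => Eexp y * eval y P) y (Pi.single j 1) = _
  rw [h.fderiv]
  simp only [ContinuousLinearMap.add_apply, ContinuousLinearMap.smul_apply,
    evalDeriv_single, Ederiv_single, smul_eq_mul, eval_add, eval_mul, eval_X]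
  ring

noncomputable def wfac {k : ℕ} (i : Fin k → Fin N) (σ : Equiv.Perm (Fin k)) (a : Fin k) :
    MvPolynomial (Fin N) ℝ :=
  if σ a = a then X (i a) else (if i (σ a) = i a then 1 else 0)

noncomputable def Wpoly {k : ℕ} (i : Fin k → Fin N) : MvPolynomial (Fin N) ℝ :=
  ∑ σ ∈ Finset.univ.filter (fun σ : Equiv.Perm (Fin k) => ⇑σ ∘ ⇑σ = id), ∏ a, wfac i σ a

lemma pderiv_prod {ι : Type*} [DecidableEq ι] (s : Finset ι) (j : Fin N)
    (f : ι → MvPolynomial (Fin N) ℝ) :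
    pderiv j (∏ a ∈ s, f a) = ∑ b ∈ s, pderiv j (f b) * ∏ a ∈ s.erase b, f a := by
  induction s using Finset.induction_on with
  | empty => simp
  | @insert c s hc ih =>
    rw [Finset.prod_insert hc, pderiv_mul, Finset.sum_insert hc, Finset.erase_insert hc, ih,
      Finset.mul_sum]
    congr 1
    refine Finset.sum_congr rfl fun b hb => ?_
    have hbc : b ≠ c := fun h => hc (h ▸ hb)
    rw [Finset.erase_insert_of_ne hbc.symm,
      Finset.prod_insert (fun h => hc (Finset.mem_of_mem_erase h)), mul_left_comm]

lemma inv_iff {k : ℕ} (σ : Equiv.Perm (Fin k)) : ⇑σ ∘ ⇑σ = id ↔ ∀ a, σ (σ a) = a :=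
  ⟨fun h a => congrFun h a, fun h => funext h⟩

lemma dsymm_succ_zero {k : ℕ} (τ : Equiv.Perm (Fin k)) (a : Fin k) :
    (Equiv.Perm.decomposeFin.symm (0, τ)) a.succ = (τ a).succ := by
  rw [Equiv.Perm.decomposeFin_symm_apply_succ, Equiv.swap_self, Equiv.refl_apply]

lemma dsymm_succ_succ {k : ℕ} (b : Fin k) (τ : Equiv.Perm (Fin k)) (a : Fin k) :
    (Equiv.Perm.decomposeFin.symm (b.succ, τ)) a.succ
      = if τ a = b then 0 else (τ a).succ := by
  rw [Equiv.Perm.decomposeFin_symm_apply_succ]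
  by_cases h : τ a = b
  · rw [h, if_pos rfl, Equiv.swap_apply_right]
  · rw [if_neg h, Equiv.swap_apply_of_ne_of_ne (Fin.succ_ne_zero _)
      (by simpa [Fin.succ_inj] using h)]

lemma inv_dsymm_zero_iff {k : ℕ} (τ : Equiv.Perm (Fin k)) :
    ⇑(Equiv.Perm.decomposeFin.symm ((0 : Fin (k+1)), τ))
      ∘ ⇑(Equiv.Perm.decomposeFin.symm ((0 : Fin (k+1)), τ)) = id ↔ ⇑τ ∘ ⇑τ = id := by
  rw [inv_iff, inv_iff]
  constructor
  · intro h a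
    have := h a.succ
    rw [dsymm_succ_zero, dsymm_succ_zero] at this
    exact Fin.succ_injective _ this
  · intro h x
    refine Fin.cases ?_ (fun a => ?_) x
    · rw [Equiv.Perm.decomposeFin_symm_apply_zero, Equiv.Perm.decomposeFin_symm_apply_zero]
    · rw [dsymm_succ_zero, dsymm_succ_zero, h a]

lemma inv_dsymm_succ_iff {k : ℕ} (b : Fin k) (τ : Equiv.Perm (Fin k)) :
    ⇑(Equiv.Perm.decomposeFin.symm (b.succ, τ))
      ∘ ⇑(Equiv.Perm.decomposeFin.symm (b.succ, τ)) = id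
      ↔ (⇑τ ∘ ⇑τ = id ∧ τ b = b) := by
  rw [inv_iff, inv_iff]
  constructor
  · intro h
    have hb : τ b = b := by
      have h0 := h 0
      rw [Equiv.Perm.decomposeFin_symm_apply_zero, dsymm_succ_succ] at h0
      by_cases hτ : τ b = b
      · exact hτ
      · rw [if_neg hτ] at h0
        exact absurd h0 (Fin.succ_ne_zero _)
    refine ⟨fun a => ?_, hb⟩
    have ha := h a.succ
    rw [dsymm_succ_succ] at ha
    by_cases h1 : τ a = b
    · rw [if_pos h1, Equiv.Perm.decomposeFin_symm_apply_zero] at ha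
      rw [h1, hb]
      exact Fin.succ_injective _ ha
    · rw [if_neg h1, dsymm_succ_succ] at ha
      by_cases h2 : τ (τ a) = b
      · rw [if_pos h2] at ha
        exact absurd ha.symm (Fin.succ_ne_zero a)
      · rw [if_neg h2] at ha
        exact Fin.succ_injective _ ha
  · rintro ⟨hτ, hb⟩ x
    refine Fin.cases ?_ (fun a => ?_) x
    · rw [Equiv.Perm.decomposeFin_symm_apply_zero, dsymm_succ_succ, if_pos hb]
    · by_cases h1 : τ a = b
      · have hab : a = b := τ.injective (h1.trans hb.symm)
        rw [dsymm_succ_succ, if_pos h1, Equiv.Perm.decomposeFin_symm_apply_zero, hab]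
      · rw [dsymm_succ_succ, if_neg h1, dsymm_succ_succ, hτ a,
          if_neg (fun h2 : a = b => h1 (by rw [h2, hb]))]

lemma prod_cons_zero {k : ℕ} (j : Fin N) (i : Fin k → Fin N) (τ : Equiv.Perm (Fin k)) :
    ∏ a : Fin (k+1), wfac (Fin.cons j i) (Equiv.Perm.decomposeFin.symm ((0 : Fin (k+1)), τ)) a
      = X j * ∏ a, wfac i τ a := by
  rw [Fin.prod_univ_succ]
  refine congrArg₂ (· * ·) ?_ (Finset.prod_congr rfl fun a _ => ?_)
  · simp [wfac, Equiv.Perm.decomposeFin_symm_apply_zero]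
  · simp only [wfac, dsymm_succ_zero, Fin.succ_inj, Fin.cons_succ]

lemma prod_cons_succ {k : ℕ} (j : Fin N) (i : Fin k → Fin N) (τ : Equiv.Perm (Fin k))
    (b : Fin k) (hτ : ∀ a, τ (τ a) = a) (hb : τ b = b) :
    ∏ a : Fin (k+1), wfac (Fin.cons j i) (Equiv.Perm.decomposeFin.symm (b.succ, τ)) a
      = (if i b = j then (1 : MvPolynomial (Fin N) ℝ) else 0)
          * ∏ a ∈ Finset.univ.erase b, wfac i τ a := by
  rw [Fin.prod_univ_succ]
  have h0 : wfac (Fin.cons j i) (Equiv.Perm.decomposeFin.symm (b.succ, τ)) 0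
      = (if i b = j then (1 : MvPolynomial (Fin N) ℝ) else 0) := by
    simp [wfac, Equiv.Perm.decomposeFin_symm_apply_zero, (Fin.succ_ne_zero b), Fin.cons_succ]
  have h1 : ∏ a : Fin k, wfac (Fin.cons j i) (Equiv.Perm.decomposeFin.symm (b.succ, τ)) a.succ
      = (if j = i b then (1 : MvPolynomial (Fin N) ℝ) else 0)
          * ∏ a ∈ Finset.univ.erase b, wfac i τ a := by
    rw [← Finset.mul_prod_erase Finset.univ _ (Finset.mem_univ b)]
    congr 1
    · simp [wfac, dsymm_succ_succ, hb, (Fin.succ_ne_zero b).symm, Fin.cons_succ]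
    · refine Finset.prod_congr rfl fun a ha => ?_
      have hab : a ≠ b := Finset.ne_of_mem_erase ha
      have h2 : τ a ≠ b := fun h => hab (by rw [← hτ a, h, hb])
      simp only [wfac, dsymm_succ_succ, if_neg h2, Fin.succ_inj, Fin.cons_succ]
  rw [h0, h1, ← mul_assoc]
  congr 1
  by_cases h : i b = j
  · rw [if_pos h, if_pos h.symm, one_mul]
  · rw [if_neg h, if_neg (fun hh => h hh.symm), zero_mul]

lemma pderiv_wfac {k : ℕ} (j : Fin N) (i : Fin k → Fin N) (τ : Equiv.Perm (Fin k)) (b : Fin k) :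
    pderiv j (wfac i τ b)
      = if τ b = b then (if i b = j then (1 : MvPolynomial (Fin N) ℝ) else 0) else 0 := by
  rw [wfac]
  by_cases h : τ b = b
  · rw [if_pos h, if_pos h]
    by_cases h2 : i b = j
    · simp [h2, pderiv_X_self]
    · rw [pderiv_X_of_ne h2, if_neg h2]
  · rw [if_neg h, if_neg h]
    by_cases h2 : i (τ b) = i b
    · rw [if_pos h2, pderiv_one]
    · rw [if_neg h2, map_zero]

set_option maxHeartbeats 1000000 in
lemma Wpoly_cons {k : ℕ} (j : Fin N) (i : Fin k → Fin N) :
    Wpoly (Fin.cons j i) = X j * Wpoly i + pderiv j (Wpoly i) := by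
  classical
  have hL : Wpoly (Fin.cons j i)
      = ∑ p : Fin (k+1), ∑ τ : Equiv.Perm (Fin k),
          (if ⇑(Equiv.Perm.decomposeFin.symm (p, τ))
              ∘ ⇑(Equiv.Perm.decomposeFin.symm (p, τ)) = id
           then ∏ a, wfac (Fin.cons j i) (Equiv.Perm.decomposeFin.symm (p, τ)) a else 0) := by
    rw [Wpoly, Finset.sum_filter,
      ← Equiv.sum_comp (Equiv.Perm.decomposeFin).symm
        (fun σ : Equiv.Perm (Fin (k+1)) =>
          if ⇑σ ∘ ⇑σ = id then ∏ a, wfac (Fin.cons j i) σ a else 0),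
      Fintype.sum_prod_type]
  rw [hL, Fin.sum_univ_succ]
  congr 1
  · rw [Wpoly, Finset.sum_filter, Finset.mul_sum]
    refine Finset.sum_congr rfl fun τ _ => ?_
    by_cases h : ⇑τ ∘ ⇑τ = id
    · rw [if_pos ((inv_dsymm_zero_iff τ).mpr h), if_pos h, prod_cons_zero]
    · rw [if_neg (fun hh => h ((inv_dsymm_zero_iff τ).mp hh)), if_neg h, mul_zero]
  · have hR : pderiv j (Wpoly i) = ∑ τ : Equiv.Perm (Fin k), ∑ b : Fin k,
        (if ⇑τ ∘ ⇑τ = id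
         then pderiv j (wfac i τ b) * ∏ a ∈ Finset.univ.erase b, wfac i τ a else 0) := by
      rw [Wpoly, Finset.sum_filter, map_sum]
      refine Finset.sum_congr rfl fun τ _ => ?_
      by_cases h : ⇑τ ∘ ⇑τ = id
      · rw [if_pos h, pderiv_prod]
        exact Finset.sum_congr rfl fun b _ => (if_pos h).symm
      · rw [if_neg h, map_zero]
        exact (Finset.sum_eq_zero fun b _ => if_neg h).symm
    rw [hR, Finset.sum_comm]
    refine Finset.sum_congr rfl fun τ _ => Finset.sum_congr rfl fun b _ => ?_
    by_cases h1 : ⇑τ ∘ ⇑τ = id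
    · by_cases h2 : τ b = b
      · rw [if_pos ((inv_dsymm_succ_iff b τ).mpr ⟨h1, h2⟩), if_pos h1, pderiv_wfac, if_pos h2]
        exact prod_cons_succ j i τ b ((inv_iff τ).mp h1) h2
      · rw [if_neg (fun hh => h2 ((inv_dsymm_succ_iff b τ).mp hh).2), if_pos h1, pderiv_wfac,
          if_neg h2, zero_mul]
    · rw [if_neg (fun hh => h1 ((inv_dsymm_succ_iff b τ).mp hh).1), if_neg h1]

lemma foldr_eq {k : ℕ} (i : Fin k → Fin N) :
    (List.ofFn i).foldr (fun j P => X j * P + pderiv j P) 1 = Wpoly i := by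
  induction k with
  | zero =>
    simp only [List.ofFn_zero, List.foldr_nil]
    rw [Wpoly]
    have h : (Finset.univ.filter (fun σ : Equiv.Perm (Fin 0) => ⇑σ ∘ ⇑σ = id)) = {1} := by
      ext σ
      simp only [Finset.mem_filter, Finset.mem_univ, true_and, Finset.mem_singleton]
      exact ⟨fun _ => Subsingleton.elim _ _, fun _ => funext fun x => x.elim0⟩
    rw [h, Finset.sum_singleton]
    simp
  | succ k ih =>
    rw [List.ofFn_succ, List.foldr_cons, ih (fun a => i a.succ),
      ← Wpoly_cons (i 0) (fun a => i a.succ),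
      show Fin.cons (i 0) (fun a => i a.succ) = i from Fin.cons_self_tail i]

lemma main_aux (l : List (Fin N)) :
    l.foldr (fun j g => partialDeriv' j g) Eexp
      = fun y => Eexp y * eval y (l.foldr (fun j P => X j * P + pderiv j P) 1) := by
  induction l with
  | nil => funext y; simp
  | cons j l ih => rw [List.foldr_cons, List.foldr_cons, ih, step]

end WickAux

/-- Wick's theorem (finite-dimensional form): the `k`-th mixed partial derivative of
`exp ((1/2) ∑ j, (x j)^2)` equals the same exponential times the sum over all
involutions `σ` of `Fin k`, where each fixed point `a` of `σ` contributes the factor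
`x (i a)` and each two-cycle `{a, σ a}` contributes the Kronecker delta `δ_{i (σ a), i a}`. -/
theorem mixedPartial_exp_sq_eq_sum_involutions (N k : ℕ) (i : Fin k → Fin N)
    (x : Fin N → ℝ) :
    mixedPartialAlong i (fun y => Real.exp ((1 / 2) * ∑ j, (y j) ^ 2)) x =
      Real.exp ((1 / 2) * ∑ j, (x j) ^ 2) *
        ∑ σ ∈ Finset.univ.filter (fun σ : Equiv.Perm (Fin k) => σ ∘ σ = id),
          ∏ a, (if σ a = a then x (i a) else (if i (σ a) = i a then 1 else 0)) := by
  have h := congrFun (WickAux.main_aux (N := N) (List.ofFn i)) x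
  rw [WickAux.foldr_eq] at h
  show ((List.ofFn i).foldr (fun j g => partialDeriv' j g) WickAux.Eexp) x = _
  rw [h]
  show WickAux.Eexp x * eval x (WickAux.Wpoly i) = _
  congr 1
  rw [WickAux.Wpoly, map_sum]
  refine Finset.sum_congr rfl fun σ _ => ?_
  rw [map_prod]
  refine Finset.prod_congr rfl fun a _ => ?_
  simp [WickAux.wfac, apply_ite (eval x)]
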